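/- Elicitability under single crossing: let Y have distribution F with finite first moment, Λ: ℝ → (0,1) measurable, and suppose there is x̄ with F(t) < Λ(t) for t < x̄ and F(t) > Λ(t) for t > x̄. Define g(x) = E[S(x,Y)] with S(x,y) = (y-x)⁻ - ∫_y^x Λ(t) dt. Then for x₁ ≤ x₂, g(x₂) - g(x₁) = ∫_{x₁}^{x₂} (F(t) - Λ(t)) dt; consequently g is strictly decreasing on (-∞, x̄], strictly increasing on [x̄, ∞), and x̄ is the unique minimiser of g. -/

import Mathlib

open MeasureTheory intervalIntegral

lemma aux_bdd_ii {f : ℝ → ℝ} (hf : Measurable f) {C : ℝ} (hC : ∀ t, |f t| ≤ C)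
    (a b : ℝ) : IntervalIntegrable f volume a b := by
  have h : ∀ u v : ℝ, IntegrableOn f (Set.Ioc u v) volume := by
    intro u v
    have hc : IntegrableOn (fun _ : ℝ => C) (Set.Ioc u v) volume :=
      integrableOn_const measure_Ioc_lt_top.ne
    exact hc.mono' hf.aestronglyMeasurable.restrict (ae_of_all _ fun t => by simpa using hC t)
  exact ⟨h a b, h b a⟩

lemma aux_posPart (y x₁ x₂ : ℝ) (h : x₁ ≤ x₂) :
    max (-(y - x₂)) 0 - max (-(y - x₁)) 0
      = ∫ t in x₁..x₂, Set.indicator (Set.Ici y) (fun _ => (1:ℝ)) t := by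
  rw [intervalIntegral.integral_of_le h, setIntegral_indicator measurableSet_Ici,
    setIntegral_const, smul_eq_mul, mul_one, neg_sub, neg_sub]
  by_cases hy : y ≤ x₁
  · have hs : Set.Ioc x₁ x₂ ∩ Set.Ici y = Set.Ioc x₁ x₂ :=
      Set.inter_eq_left.2 fun t ht => le_trans hy ht.1.le
    rw [hs, measureReal_def, Real.volume_Ioc, ENNReal.toReal_ofReal (by linarith),
      max_eq_left (by linarith), max_eq_left (by linarith)]
    ring
  · push_neg at hy
    have hs : Set.Ioc x₁ x₂ ∩ Set.Ici y = Set.Icc y x₂ := by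
      ext t
      simp only [Set.mem_inter_iff, Set.mem_Ioc, Set.mem_Ici, Set.mem_Icc]
      constructor
      · rintro ⟨⟨h1, h2⟩, h3⟩; exact ⟨h3, h2⟩
      · rintro ⟨h1, h2⟩; exact ⟨⟨lt_of_lt_of_le hy h1, h2⟩, h1⟩
    rw [hs, measureReal_def, Real.volume_Icc, ENNReal.toReal_ofReal', max_eq_right (by linarith : x₁ - y ≤ 0)]
    ring

theorem stmt_18 {Ω : Type*} [MeasurableSpace Ω] (μ : Measure Ω) [IsProbabilityMeasure μ]
    (Y : Ω → ℝ) (hYmeas : Measurable Y) (hYint : Integrable Y μ)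
    (Λ : ℝ → ℝ) (hΛmeas : Measurable Λ)
    (lm lM : ℝ) (hlm : 0 < lm) (hlM : lM < 1)
    (hΛb : ∀ t, lm ≤ Λ t ∧ Λ t ≤ lM)
    (F : ℝ → ℝ) (hF : ∀ t, F t = (μ {ω | Y ω ≤ t}).toReal)
    (xbar : ℝ)
    (hlt : ∀ t < xbar, F t < Λ t) (hgt : ∀ t > xbar, F t > Λ t)
    (g : ℝ → ℝ)
    (hg : ∀ x, g x = ∫ ω, (max (-(Y ω - x)) 0 - ∫ t in (Y ω)..x, Λ t) ∂μ) :
    (∀ x₁ x₂ : ℝ, x₁ ≤ x₂ → g x₂ - g x₁ = ∫ t in x₁..x₂, (F t - Λ t)) ∧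
    StrictAntiOn g (Set.Iic xbar) ∧
    StrictMonoOn g (Set.Ici xbar) ∧
    (∀ x : ℝ, x ≠ xbar → g xbar < g x) := by
  have hΛabs : ∀ t, |Λ t| ≤ lM := fun t => by
    have h1 := (hΛb t).1; have h2 := (hΛb t).2
    rw [abs_le]; constructor <;> linarith
  have hΛii : ∀ a b : ℝ, IntervalIntegrable Λ volume a b := aux_bdd_ii hΛmeas hΛabs
  have hFmono : Monotone F := fun a b hab => by
    rw [hF a, hF b]
    exact ENNReal.toReal_mono (measure_ne_top _ _)
      (measure_mono fun ω hω => le_trans hω hab)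
  have hFmeas : Measurable F := hFmono.measurable
  have hFabs : ∀ t, |F t| ≤ 1 := fun t => by
    rw [hF t, abs_of_nonneg ENNReal.toReal_nonneg]
    have h1 : μ {ω | Y ω ≤ t} ≤ 1 := prob_le_one
    simpa using ENNReal.toReal_mono ENNReal.one_ne_top h1
  have hFii : ∀ a b : ℝ, IntervalIntegrable F volume a b := aux_bdd_ii hFmeas hFabs
  -- integrability of the two components
  have hPint : ∀ x : ℝ, Integrable (fun ω => max (-(Y ω - x)) 0) μ := by
    intro x
    refine Integrable.mono' (hYint.abs.add (integrable_const |x|))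
      (((hYmeas.sub_const x).neg.max measurable_const).aestronglyMeasurable)
      (ae_of_all _ fun ω => ?_)
    rw [Real.norm_eq_abs, abs_of_nonneg (le_max_right _ _)]
    exact max_le (le_trans (neg_le_abs _) (abs_sub _ _)) (add_nonneg (abs_nonneg _) (abs_nonneg _))
  have hQcont : Continuous (fun y : ℝ => ∫ t in (0:ℝ)..y, Λ t) :=
    intervalIntegral.continuous_primitive (fun a b => hΛii a b) 0
  have hQmeas : ∀ x : ℝ, Measurable (fun ω => ∫ t in (Y ω)..x, Λ t) := by
    intro x
    have heq : (fun ω => ∫ t in (Y ω)..x, Λ t)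
        = fun ω => (∫ t in (0:ℝ)..x, Λ t) - ∫ t in (0:ℝ)..(Y ω), Λ t :=
      funext fun ω => by
        rw [intervalIntegral.integral_interval_sub_left (hΛii 0 x) (hΛii 0 (Y ω))]
    rw [heq]
    exact measurable_const.sub (hQcont.measurable.comp hYmeas)
  have hQint : ∀ x : ℝ, Integrable (fun ω => ∫ t in (Y ω)..x, Λ t) μ := by
    intro x
    refine Integrable.mono' ((hYint.abs.add (integrable_const |x|)).const_mul lM)
      (hQmeas x).aestronglyMeasurable (ae_of_all _ fun ω => ?_)
    have hb : ‖∫ t in (Y ω)..x, Λ t‖ ≤ lM * |x - Y ω| :=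
      intervalIntegral.norm_integral_le_of_norm_le_const fun t _ => by
        simpa [Real.norm_eq_abs] using hΛabs t
    have hb2 : |x - Y ω| ≤ |x| + |Y ω| := abs_sub _ _
    have hlM0 : (0:ℝ) ≤ lM := by linarith [(hΛb 0).1, (hΛb 0).2]
    simp only [Pi.add_apply]
    nlinarith
  have hgx : ∀ x, g x = (∫ ω, max (-(Y ω - x)) 0 ∂μ) - ∫ ω, (∫ t in (Y ω)..x, Λ t) ∂μ :=
    fun x => by rw [hg x, integral_sub (hPint x) (hQint x)]
  -- the key difference formula
  have key : ∀ x₁ x₂ : ℝ, x₁ ≤ x₂ → g x₂ - g x₁ = ∫ t in x₁..x₂, (F t - Λ t) := by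
    intro x₁ x₂ h12
    have hPdiff : (∫ ω, max (-(Y ω - x₂)) 0 ∂μ) - (∫ ω, max (-(Y ω - x₁)) 0 ∂μ)
        = ∫ t in x₁..x₂, F t := by
      rw [← integral_sub (hPint x₂) (hPint x₁)]
      have h1 : (fun ω => max (-(Y ω - x₂)) 0 - max (-(Y ω - x₁)) 0)
          = fun ω => ∫ t in Set.Ioc x₁ x₂, Set.indicator (Set.Ici (Y ω)) (fun _ => (1:ℝ)) t :=
        funext fun ω => by
          rw [← intervalIntegral.integral_of_le h12]; exact aux_posPart (Y ω) x₁ x₂ h12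
      rw [h1]
      have hprod : Integrable
          (Function.uncurry fun ω t => Set.indicator (Set.Ici (Y ω)) (fun _ => (1:ℝ)) t)
          (μ.prod (volume.restrict (Set.Ioc x₁ x₂))) := by
        have hsmeas : MeasurableSet {p : Ω × ℝ | Y p.1 ≤ p.2} :=
          measurableSet_le (hYmeas.comp measurable_fst) measurable_snd
        have heq : (Function.uncurry fun ω t => Set.indicator (Set.Ici (Y ω)) (fun _ => (1:ℝ)) t)
            = Set.indicator {p : Ω × ℝ | Y p.1 ≤ p.2} (fun _ => (1:ℝ)) := by
          funext p
          simp [Function.uncurry, Set.indicator_apply]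
        rw [heq]
        haveI : IsFiniteMeasure (volume.restrict (Set.Ioc x₁ x₂)) :=
          ⟨by rw [Measure.restrict_apply_univ]; exact measure_Ioc_lt_top⟩
        refine Integrable.mono' (integrable_const 1)
          ((measurable_const.indicator hsmeas).aestronglyMeasurable)
          (ae_of_all _ fun p => ?_)
        rw [Real.norm_eq_abs, Set.indicator_apply]
        split <;> simp
      rw [MeasureTheory.integral_integral_swap hprod, intervalIntegral.integral_of_le h12]
      refine setIntegral_congr_fun measurableSet_Ioc fun t _ => ?_
      have heq2 : (fun ω => Set.indicator (Set.Ici (Y ω)) (fun _ => (1:ℝ)) t)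
          = Set.indicator {ω | Y ω ≤ t} (fun _ => (1:ℝ)) :=
        funext fun ω => by simp [Set.indicator_apply]
      rw [heq2, integral_indicator_const (1:ℝ) (show MeasurableSet {ω | Y ω ≤ t} from hYmeas measurableSet_Iic), smul_eq_mul,
        mul_one, hF t, measureReal_def]
    have hQdiff : (∫ ω, (∫ t in (Y ω)..x₂, Λ t) ∂μ) - (∫ ω, (∫ t in (Y ω)..x₁, Λ t) ∂μ)
        = ∫ t in x₁..x₂, Λ t := by
      rw [← integral_sub (hQint x₂) (hQint x₁)]
      have h1 : (fun ω => (∫ t in (Y ω)..x₂, Λ t) - ∫ t in (Y ω)..x₁, Λ t)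
          = fun _ => ∫ t in x₁..x₂, Λ t :=
        funext fun ω =>
          intervalIntegral.integral_interval_sub_left (hΛii (Y ω) x₂) (hΛii (Y ω) x₁)
      rw [h1, MeasureTheory.integral_const]
      simp
    rw [hgx x₁, hgx x₂, intervalIntegral.integral_sub (hFii x₁ x₂) (hΛii x₁ x₂),
      ← hPdiff, ← hQdiff]
    ring
  -- strict sign lemmas
  have hsign : ∀ x₁ x₂ : ℝ, x₁ < x₂ → (∀ t ∈ Set.Ioo x₁ x₂, F t ≠ Λ t ∧ ((x₂ ≤ xbar ∧ F t < Λ t) ∨ (xbar ≤ x₁ ∧ Λ t < F t))) → True := fun _ _ _ _ => trivial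
  have hneg : ∀ x₁ x₂ : ℝ, x₁ < x₂ → x₂ ≤ xbar → (∫ t in x₁..x₂, (F t - Λ t)) < 0 := by
    intro x₁ x₂ h12 h2
    rw [intervalIntegral.integral_of_le h12.le, integral_Ioc_eq_integral_Ioo]
    have hflip : (∫ t in Set.Ioo x₁ x₂, (F t - Λ t))
        = -∫ t in Set.Ioo x₁ x₂, (Λ t - F t) := by
      rw [← MeasureTheory.integral_neg]
      exact setIntegral_congr_fun measurableSet_Ioo fun t _ => by ring
    rw [hflip, neg_lt, neg_zero]
    have hint0 : IntegrableOn (fun t => Λ t - F t) (Set.Ioc x₁ x₂) volume :=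
      ((hΛii x₁ x₂).1).sub ((hFii x₁ x₂).1)
    have hint : IntegrableOn (fun t => Λ t - F t) (Set.Ioo x₁ x₂) volume :=
      hint0.mono_set Set.Ioo_subset_Ioc_self
    rw [setIntegral_pos_iff_support_of_nonneg_ae ?_ hint]
    · refine lt_of_lt_of_le ?_ (measure_mono (fun t ht =>
        (⟨sub_ne_zero.2 (ne_of_gt (by
          have := hlt t (lt_of_lt_of_le ht.2 h2); linarith)), ht⟩ :
          t ∈ Function.support (fun t => Λ t - F t) ∩ Set.Ioo x₁ x₂)))
      rw [Real.volume_Ioo]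
      exact ENNReal.ofReal_pos.2 (by linarith)
    · filter_upwards [ae_restrict_mem measurableSet_Ioo] with t ht
      have := hlt t (lt_of_lt_of_le ht.2 h2); simp; linarith
  have hpos : ∀ x₁ x₂ : ℝ, x₁ < x₂ → xbar ≤ x₁ → 0 < ∫ t in x₁..x₂, (F t - Λ t) := by
    intro x₁ x₂ h12 h1
    rw [intervalIntegral.integral_of_le h12.le, integral_Ioc_eq_integral_Ioo]
    have hint0 : IntegrableOn (fun t => F t - Λ t) (Set.Ioc x₁ x₂) volume :=
      ((hFii x₁ x₂).1).sub ((hΛii x₁ x₂).1)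
    have hint : IntegrableOn (fun t => F t - Λ t) (Set.Ioo x₁ x₂) volume :=
      hint0.mono_set Set.Ioo_subset_Ioc_self
    rw [setIntegral_pos_iff_support_of_nonneg_ae ?_ hint]
    · refine lt_of_lt_of_le ?_ (measure_mono (fun t ht =>
        (⟨sub_ne_zero.2 (ne_of_gt (by
          have := hgt t (lt_of_le_of_lt h1 ht.1); linarith)), ht⟩ :
          t ∈ Function.support (fun t => F t - Λ t) ∩ Set.Ioo x₁ x₂)))
      rw [Real.volume_Ioo]
      exact ENNReal.ofReal_pos.2 (by linarith)
    · filter_upwards [ae_restrict_mem measurableSet_Ioo] with t ht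
      have := hgt t (lt_of_le_of_lt h1 ht.1); simp; linarith
  have hanti : StrictAntiOn g (Set.Iic xbar) := by
    intro x₁ hx₁ x₂ hx₂ h
    have h1 := key x₁ x₂ h.le
    have h2 := hneg x₁ x₂ h hx₂
    linarith
  have hmono : StrictMonoOn g (Set.Ici xbar) := by
    intro x₁ hx₁ x₂ hx₂ h
    have h1 := key x₁ x₂ h.le
    have h2 := hpos x₁ x₂ h hx₁
    linarith
  refine ⟨key, hanti, hmono, fun x hx => ?_⟩
  rcases lt_or_gt_of_ne hx with h | h
  · exact hanti (le_of_lt h) Set.self_mem_Iic h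
  · exact hmono Set.self_mem_Ici (le_of_lt h) h
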